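/- The complex linear span of the trigonometric exponentials {x ↦ exp(i·ξ·x) | ξ ∈ ℝ} is dense in the complex Hilbert space L²(ℝ, γ₁; ℂ), where γ₁ is the standard Gaussian probability measure on ℝ. (This instantiates the claim that the algebra of trigonometric exponentials 𝒯 is dense in the Gaussian L² space.) -/

import Mathlib

open MeasureTheory ProbabilityTheory Complex

open scoped ENNReal NNReal Real

open Set Submodule

/-- The complex linear span of the trigonometric exponentials
`x ↦ exp(i·ξ·x)`, `ξ ∈ ℝ`, is dense in `L²(ℝ, γ₁; ℂ)` for the standard
Gaussian probability measure `γ₁`: every `f ∈ L²(γ₁; ℂ)` is approximated in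
`L²`-norm by finite linear combinations of trigonometric exponentials. -/
theorem stmt9 (f : ℝ → ℂ) (hf : MemLp f 2 (gaussianReal 0 1))
    (ε : ℝ) (hε : 0 < ε) :
    ∃ (n : ℕ) (c : Fin n → ℂ) (ξ : Fin n → ℝ),
      eLpNorm (fun x : ℝ => f x - ∑ i, c i * Complex.exp (Complex.I * (ξ i : ℂ) * (x : ℂ)))
        2 (gaussianReal 0 1) < ENNReal.ofReal ε := by
  set μ := gaussianReal 0 1 with hμ
  have hε4 : (0:ℝ) < ε / 4 := by linarith
  have hε4' : ENNReal.ofReal (ε/4) ≠ 0 := (ENNReal.ofReal_pos.2 hε4).ne'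
  -- Step 1: compactly supported continuous approximation
  obtain ⟨g, g_supp, hfg, g_cont, g_mem⟩ :=
    hf.exists_hasCompactSupport_eLpNorm_sub_le ENNReal.ofNat_ne_top hε4'
  obtain ⟨M, hM⟩ := g_cont.bounded_above_of_compact_support g_supp
  have hM0 : 0 ≤ M := le_trans (norm_nonneg _) (hM 0)
  -- support radius
  obtain ⟨R, hR⟩ := g_supp.isBounded.subset_closedBall 0
  rw [Real.closedBall_eq_Icc, zero_sub, zero_add] at hR
  -- Step 2: tail control
  set cM : ℝ≥0∞ := (‖M‖₊ : ℝ≥0∞) with hcM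
  set d : ℝ≥0∞ := ENNReal.ofReal (ε/4) / (cM + 1) with hd
  have hd0 : d ≠ 0 := (ENNReal.div_pos hε4' (by finiteness)).ne'
  have hdtop : d ≠ ∞ := by
    rw [hd]
    exact (ENNReal.div_lt_top ENNReal.ofReal_ne_top (by simp)).ne
  obtain ⟨K, -, hKc, hKlt⟩ := MeasurableSet.univ.exists_isCompact_diff_lt
    (measure_ne_top μ _) (mul_ne_zero hd0 hd0 : d * d ≠ 0)
  obtain ⟨r, hr⟩ := hKc.isBounded.subset_closedBall 0
  rw [Real.closedBall_eq_Icc, zero_sub, zero_add] at hr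
  set T : ℝ := max (max R r) 0 + 1 with hT
  have hRT : R < T := by
    have := le_max_left R r; have := le_max_left (max R r) (0:ℝ); simp only [hT]; linarith
  have hrT : r < T := by
    have := le_max_right R r; have := le_max_left (max R r) (0:ℝ); simp only [hT]; linarith
  have hT0 : 0 < T := by
    have := le_max_right (max R r) (0:ℝ); simp only [hT]; linarith
  have h2T : (0:ℝ) < 2 * T := by linarith
  haveI : Fact (0 < 2 * T) := ⟨h2T⟩
  have hTT : -T + 2 * T = T := by ring
  -- vanishing of g outside Icc (-R) R
  have hg0 : ∀ x : ℝ, x ∉ Icc (-R) R → g x = 0 := by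
    intro x hx
    apply image_eq_zero_of_notMem_tsupport
    exact fun h => hx (hR h)
  -- Step 3: lift to the circle
  set G : AddCircle (2 * T) → ℂ := AddCircle.liftIco (2 * T) (-T) g with hG
  have G_cont : Continuous G := by
    apply AddCircle.liftIco_continuous
    · rw [hTT, hg0 (-T) (by simp; intro h; linarith), hg0 T (by simp; intro h; linarith)]
    · exact g_cont.continuousOn
  have G_bd : ∀ q, ‖G q‖ ≤ M := fun q => hM _
  have G_eq : ∀ x ∈ Ico (-T) T, G ↑x = g x := by
    intro x hx
    exact AddCircle.liftIco_coe_apply (by rwa [hTT])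
  set GC : C(AddCircle (2 * T), ℂ) := ⟨G, G_cont⟩ with hGC
  -- Step 4: Stone-Weierstrass on the circle
  have hdense : Dense ((span ℂ (range (@fourier (2 * T)))) : Set C(AddCircle (2 * T), ℂ)) :=
    Submodule.dense_iff_topologicalClosure_eq_top.2 span_fourier_closure_eq_top
  obtain ⟨P, hPmem, hPdist⟩ := hdense.exists_dist_lt GC hε4
  obtain ⟨n, co, v, hsum⟩ := mem_span_set'.1 hPmem
  choose m hm using fun i => (v i).2
  -- the final approximant
  refine ⟨n, co, fun i => 2 * π * (m i) / (2 * T), ?_⟩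
  set F : ℝ → ℂ := fun x => ∑ i, co i * Complex.exp (Complex.I * ((2 * π * (m i) / (2 * T) : ℝ) : ℂ) * (x : ℂ)) with hF
  have hPF : ∀ x : ℝ, P ↑x = F x := by
    intro x
    rw [← hsum, hF]
    rw [ContinuousMap.coe_sum, Finset.sum_apply]
    refine Finset.sum_congr rfl fun i _ => ?_
    rw [ContinuousMap.smul_apply, ← hm i, fourier_coe_apply, smul_eq_mul]
    congr 1
    push_cast
    ring
  -- measurability facts
  have meas_G : Continuous (fun x : ℝ => G ↑x) :=
    G_cont.comp (AddCircle.continuous_mk' (2 * T))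
  have meas_F : Continuous F := by
    rw [hF]; fun_prop
  -- Piece B : the periodization error
  have hB : eLpNorm (fun x : ℝ => g x - G ↑x) 2 μ ≤ ENNReal.ofReal (ε/4) := by
    have hpt : ∀ x : ℝ, ‖g x - G ↑x‖ ≤ ‖((Ico (-T) T)ᶜ).indicator (fun _ => M) x‖ := by
      intro x
      by_cases hx : x ∈ Ico (-T) T
      · rw [G_eq x hx, sub_self, norm_zero, indicator_of_notMem (by simpa using hx)]
        simp
      · rw [hg0 x ?_, zero_sub, norm_neg, indicator_of_mem (by simpa using hx),
          Real.norm_eq_abs]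
        · exact (G_bd _).trans (le_abs_self M)
        · simp only [mem_Ico, not_and_or, not_le, not_lt] at hx
          simp only [mem_Icc, not_and_or, not_le, not_lt]
          rcases hx with h | h
          · left; linarith
          · right; linarith
    have hsub : (Ico (-T) T)ᶜ ⊆ univ \ K := by
      intro x hx
      refine ⟨trivial, fun hxK => hx ?_⟩
      have := hr hxK
      simp only [mem_Icc] at this
      exact ⟨by linarith [this.1], by linarith [this.2]⟩
    have hmeas : μ ((Ico (-T) T)ᶜ) ≤ d * d :=
      le_trans (measure_mono hsub) hKlt.le
    calc eLpNorm (fun x : ℝ => g x - G ↑x) 2 μ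
        ≤ eLpNorm (((Ico (-T) T)ᶜ).indicator (fun _ => M)) 2 μ := eLpNorm_mono hpt
      _ = cM * μ ((Ico (-T) T)ᶜ) ^ (1 / (2:ℝ≥0∞).toReal) :=
          eLpNorm_indicator_const measurableSet_Ico.compl (by norm_num) (by norm_num)
      _ ≤ cM * (d * d) ^ ((1:ℝ)/2) := by
          have h2 : (1 / (2:ℝ≥0∞).toReal) = (1:ℝ)/2 := by norm_num
          rw [h2]
          exact mul_le_mul_right (ENNReal.rpow_le_rpow hmeas (by norm_num)) _
      _ = cM * d := by
          congr 1
          rw [← pow_two, ← ENNReal.rpow_natCast d 2, ← ENNReal.rpow_mul]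
          norm_num
      _ ≤ (cM + 1) * d := by gcongr; exact le_self_add
      _ = ENNReal.ofReal (ε/4) := by
          rw [hd, ENNReal.mul_div_cancel' (by simp) (fun h => absurd h (by finiteness))]
  -- Piece C : the Stone-Weierstrass error
  have hC : eLpNorm (fun x : ℝ => G ↑x - F x) 2 μ ≤ ENNReal.ofReal (ε/4) := by
    have hpt : ∀ x : ℝ, ‖G ↑x - F x‖ ≤ ε/4 := by
      intro x
      rw [← hPF x]
      calc ‖G ↑x - P ↑x‖ = dist (GC ↑x) (P ↑x) := by rw [dist_eq_norm]; rfl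
        _ ≤ dist GC P := ContinuousMap.dist_apply_le_dist _
        _ ≤ ε/4 := hPdist.le
    refine (eLpNorm_le_of_ae_bound (ae_of_all _ hpt)).trans ?_
    have : IsProbabilityMeasure μ := inferInstance
    simp [measure_univ]
  -- assemble
  have hsplit : (fun x : ℝ => f x - F x) =
      (f - g) + ((fun x : ℝ => g x - G ↑x) + fun x : ℝ => G ↑x - F x) := by
    funext x
    simp only [Pi.add_apply, Pi.sub_apply]
    ring
  have htri : eLpNorm (fun x : ℝ => f x - F x) 2 μ ≤
      ENNReal.ofReal (ε/4) + (ENNReal.ofReal (ε/4) + ENNReal.ofReal (ε/4)) := by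
    rw [hsplit]
    refine le_trans (eLpNorm_add_le (hf.1.sub g_mem.1)
      ((g_cont.sub meas_G).aestronglyMeasurable.add
        (meas_G.sub meas_F).aestronglyMeasurable) (by norm_num)) ?_
    refine add_le_add hfg ?_
    refine le_trans (eLpNorm_add_le (g_cont.sub meas_G).aestronglyMeasurable
      (meas_G.sub meas_F).aestronglyMeasurable (by norm_num)) (add_le_add hB hC)
  refine lt_of_le_of_lt htri ?_
  rw [← ENNReal.ofReal_add (by linarith) (by linarith), ← ENNReal.ofReal_add (by linarith) (by linarith)]
  exact ENNReal.ofReal_lt_ofReal_iff hε |>.2 (by linarith)
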